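/- Fix integers K ≥ 1 and N ≥ 1. For k,l ∈ {1,…,K} and n ∈ {1,…,N} let channel power gains g_{kln} > 0, noise powers σ_{kn}² > 0, rate weights w_k > 0, and an SINR gap Γ ≥ 1 be given. Let P⁰ ∈ ℝ^{K×N} have all entries strictly positive, and set a_{kn} = w_k·SINR_{kn}(P⁰)/(Γ + SINR_{kn}(P⁰)). Then for every P ∈ ℝ^{K×N} with all entries strictly positive, g(P) ≥ g(P⁰) + Σ_{k=1}^K Σ_{n=1}^N a_{kn}·log( SINR_{kn}(P)/SINR_{kn}(P⁰) ), with equality if and only if SINR_{kn}(P) = SINR_{kn}(P⁰) for all k and n. -/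

import Mathlib

/-- Interference-plus-noise power `I_{kn}(P) = σ_{kn}² + Σ_{l≠k} g_{kln} P_{ln}`. -/
noncomputable def interf (K N : ℕ) (g : Fin K → Fin K → Fin N → ℝ)
    (σ2 : Fin K → Fin N → ℝ) (P : Fin K → Fin N → ℝ) (k : Fin K) (n : Fin N) : ℝ :=
  σ2 k n + ∑ l ∈ Finset.univ.erase k, g k l n * P l n

/-- SINR `SINR_{kn}(P) = g_{kkn} P_{kn} / I_{kn}(P)`. -/
noncomputable def sinr (K N : ℕ) (g : Fin K → Fin K → Fin N → ℝ)
    (σ2 : Fin K → Fin N → ℝ) (P : Fin K → Fin N → ℝ) (k : Fin K) (n : Fin N) : ℝ :=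
  g k k n * P k n / interf K N g σ2 P k n

/-- Weighted sum rate `g(P) = Σ_k Σ_n w_k log(1 + SINR_{kn}(P)/Γ)`. -/
noncomputable def wsr (K N : ℕ) (g : Fin K → Fin K → Fin N → ℝ)
    (σ2 : Fin K → Fin N → ℝ) (w : Fin K → ℝ) (Γ : ℝ)
    (P : Fin K → Fin N → ℝ) : ℝ :=
  ∑ k, ∑ n, w k * Real.log (1 + sinr K N g σ2 P k n / Γ)

lemma log_concave_pt (α s : ℝ) (hα0 : 0 < α) (hα1 : α < 1) (hs : 0 < s) :
    α * Real.log s ≤ Real.log (α * s + (1 - α)) ∧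
    (α * Real.log s = Real.log (α * s + (1 - α)) ↔ s = 1) := by
  rcases eq_or_ne s 1 with h | h
  · subst h; simp
  · have hb : 0 < 1 - α := by linarith
    have := strictConcaveOn_log_Ioi.2 (Set.mem_Ioi.2 hs) (Set.mem_Ioi.2 one_pos) h hα0 hb
      (by ring)
    simp only [smul_eq_mul, mul_one, Real.log_one] at this
    exact ⟨by nlinarith, ⟨fun he => by nlinarith, fun hc => absurd hc h⟩⟩

lemma key_ineq (Γ z z0 : ℝ) (hΓ : 0 < Γ) (hz : 0 < z) (hz0 : 0 < z0) :
    z0 / (Γ + z0) * Real.log (z / z0) ≤ Real.log (1 + z / Γ) - Real.log (1 + z0 / Γ) ∧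
    (z0 / (Γ + z0) * Real.log (z / z0) = Real.log (1 + z / Γ) - Real.log (1 + z0 / Γ) ↔
      z = z0) := by
  have hΓz0 : 0 < Γ + z0 := by linarith
  set α : ℝ := z0 / (Γ + z0) with hα
  set s : ℝ := z / z0 with hs
  have hα0 : 0 < α := div_pos hz0 hΓz0
  have hα1 : α < 1 := (div_lt_one hΓz0).2 (by linarith)
  have hspos : 0 < s := div_pos hz hz0
  obtain ⟨h1, h2⟩ := log_concave_pt α s hα0 hα1 hspos
  have hval : α * s + (1 - α) = (Γ + z) / (Γ + z0) := by
    rw [hα, hs]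
    field_simp
    ring
  have hrhs : Real.log (1 + z / Γ) - Real.log (1 + z0 / Γ) = Real.log (α * s + (1 - α)) := by
    rw [hval, show (1 : ℝ) + z / Γ = (Γ + z) / Γ by field_simp,
      show (1 : ℝ) + z0 / Γ = (Γ + z0) / Γ by field_simp,
      Real.log_div (by linarith) hΓ.ne', Real.log_div hΓz0.ne' hΓ.ne',
      Real.log_div (by linarith) hΓz0.ne']
    ring
  rw [hrhs]
  refine ⟨h1, h2.trans ?_⟩
  rw [hs, div_eq_one_iff_eq hz0.ne']

lemma sinr_pos (K N : ℕ) (g : Fin K → Fin K → Fin N → ℝ) (hg : ∀ k l n, 0 < g k l n)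
    (σ2 : Fin K → Fin N → ℝ) (hσ : ∀ k n, 0 < σ2 k n)
    (P : Fin K → Fin N → ℝ) (hP : ∀ k n, 0 < P k n) (k : Fin K) (n : Fin N) :
    0 < sinr K N g σ2 P k n := by
  apply div_pos (mul_pos (hg k k n) (hP k n))
  apply add_pos_of_pos_of_nonneg (hσ k n)
  exact Finset.sum_nonneg fun l _ => (mul_pos (hg k l n) (hP l n)).le

/-- the SCALE surrogate `g(P⁰) + Σ_{k,n} a_{kn} log(SINR_{kn}(P)/SINR_{kn}(P⁰))`,
with `a_{kn} = w_k SINR_{kn}(P⁰)/(Γ + SINR_{kn}(P⁰))`, is a lower bound of the weighted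
sum rate `g(P)` on the positive orthant, with equality iff all SINRs coincide with
those at `P⁰`. -/
theorem scale_surrogate_lower_bound (K N : ℕ) (hK : 1 ≤ K) (hN : 1 ≤ N)
    (g : Fin K → Fin K → Fin N → ℝ) (hg : ∀ k l n, 0 < g k l n)
    (σ2 : Fin K → Fin N → ℝ) (hσ : ∀ k n, 0 < σ2 k n)
    (w : Fin K → ℝ) (hw : ∀ k, 0 < w k) (Γ : ℝ) (hΓ : 1 ≤ Γ)
    (P0 : Fin K → Fin N → ℝ) (hP0 : ∀ k n, 0 < P0 k n) :
    ∀ P : Fin K → Fin N → ℝ, (∀ k n, 0 < P k n) →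
      wsr K N g σ2 w Γ P ≥
          wsr K N g σ2 w Γ P0 +
            ∑ k, ∑ n,
              w k * sinr K N g σ2 P0 k n / (Γ + sinr K N g σ2 P0 k n) *
                Real.log (sinr K N g σ2 P k n / sinr K N g σ2 P0 k n) ∧
        (wsr K N g σ2 w Γ P =
            wsr K N g σ2 w Γ P0 +
              ∑ k, ∑ n,
                w k * sinr K N g σ2 P0 k n / (Γ + sinr K N g σ2 P0 k n) *
                  Real.log (sinr K N g σ2 P k n / sinr K N g σ2 P0 k n) ↔
          ∀ k n, sinr K N g σ2 P k n = sinr K N g σ2 P0 k n) := by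
  intro P hP
  have hΓ0 : 0 < Γ := lt_of_lt_of_le one_pos hΓ
  set d : Fin K → Fin N → ℝ := fun k n =>
    w k * Real.log (1 + sinr K N g σ2 P k n / Γ) -
      w k * Real.log (1 + sinr K N g σ2 P0 k n / Γ) -
      w k * sinr K N g σ2 P0 k n / (Γ + sinr K N g σ2 P0 k n) *
        Real.log (sinr K N g σ2 P k n / sinr K N g σ2 P0 k n) with hdef
  have hd : ∀ k n, 0 ≤ d k n ∧ (d k n = 0 ↔ sinr K N g σ2 P k n = sinr K N g σ2 P0 k n) := by
    intro k n
    obtain ⟨h1, h2⟩ := key_ineq Γ (sinr K N g σ2 P k n) (sinr K N g σ2 P0 k n) hΓ0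
      (sinr_pos K N g hg σ2 hσ P hP k n) (sinr_pos K N g hg σ2 hσ P0 hP0 k n)
    have hrw : d k n = w k *
        ((Real.log (1 + sinr K N g σ2 P k n / Γ) - Real.log (1 + sinr K N g σ2 P0 k n / Γ)) -
          sinr K N g σ2 P0 k n / (Γ + sinr K N g σ2 P0 k n) *
            Real.log (sinr K N g σ2 P k n / sinr K N g σ2 P0 k n)) := by
      simp only [hdef]; ring
    constructor
    · rw [hrw]; exact mul_nonneg (hw k).le (by linarith)
    · rw [hrw, mul_eq_zero]
      constructor
      · rintro (h | h)
        · exact absurd h (hw k).ne'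
        · exact h2.1 (by linarith)
      · intro h
        right
        have := h2.2 h
        linarith
  have hsum : wsr K N g σ2 w Γ P -
      (wsr K N g σ2 w Γ P0 +
        ∑ k, ∑ n,
          w k * sinr K N g σ2 P0 k n / (Γ + sinr K N g σ2 P0 k n) *
            Real.log (sinr K N g σ2 P k n / sinr K N g σ2 P0 k n)) =
      ∑ k, ∑ n, d k n := by
    unfold wsr
    rw [← Finset.sum_add_distrib, ← Finset.sum_sub_distrib]
    refine Finset.sum_congr rfl fun k _ => ?_
    rw [← Finset.sum_add_distrib, ← Finset.sum_sub_distrib]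
    refine Finset.sum_congr rfl fun n _ => ?_
    simp only [hdef]; ring
  have hpos : 0 ≤ ∑ k, ∑ n, d k n :=
    Finset.sum_nonneg fun k _ => Finset.sum_nonneg fun n _ => (hd k n).1
  constructor
  · linarith
  · constructor
    · intro he
      have h0 : ∑ k, ∑ n, d k n = 0 := by linarith
      intro k n
      have hk := (Finset.sum_eq_zero_iff_of_nonneg
        (fun k _ => Finset.sum_nonneg fun n _ => (hd k n).1)).1 h0 k (Finset.mem_univ k)
      have hn := (Finset.sum_eq_zero_iff_of_nonneg (fun n _ => (hd k n).1)).1 hk n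
        (Finset.mem_univ n)
      exact (hd k n).2.1 hn
    · intro hall
      have h0 : ∑ k, ∑ n, d k n = 0 :=
        Finset.sum_eq_zero fun k _ => Finset.sum_eq_zero fun n _ => (hd k n).2.2 (hall k n)
      linarith
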